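/- Let e_0, …, e_n be a basis of the rational vector space ℚ^{n+1}. Then the vectors V := ∑_{k=0}^n (-1)^{n-k} k! (n-k)! e_k and R(ℓ) := ∑_{k≥ℓ} C(k,ℓ) e_k for 0 ≤ ℓ ≤ n-1 together form a basis of ℚ^{n+1}. -/

import Mathlib

open Finset

lemma key_alt (n l : ℕ) (h : l < n) :
    ∑ k ∈ Finset.range (n+1), (-1:ℚ)^k * (n.choose k) * (k.choose l) = 0 := by
  have hl : l ≤ n + 1 := by omega
  rw [← Finset.sum_range_add_sum_Ico _ hl]
  have h1 : ∑ k ∈ Finset.range l, (-1:ℚ)^k * (n.choose k) * (k.choose l) = 0 := by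
    apply Finset.sum_eq_zero
    intro k hk
    rw [Finset.mem_range] at hk
    rw [Nat.choose_eq_zero_of_lt hk]
    simp
  rw [h1, zero_add, Finset.sum_Ico_eq_sum_range]
  have h2 : ∀ m ∈ Finset.range (n + 1 - l),
      (-1:ℚ)^(l+m) * (n.choose (l+m)) * ((l+m).choose l)
        = ((-1:ℚ)^l * (n.choose l)) * ((-1:ℚ)^m * ((n-l).choose m)) := by
    intro m hm
    rw [Finset.mem_range] at hm
    have hkn : l + m ≤ n := by omega
    have hmul : n.choose (l+m) * (l+m).choose l = n.choose l * (n-l).choose (l+m-l) :=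
      Nat.choose_mul (Nat.le_add_right l m)
    simp only [Nat.add_sub_cancel_left] at hmul
    have : (n.choose (l+m) : ℚ) * ((l+m).choose l) = (n.choose l : ℚ) * ((n-l).choose m) := by
      exact_mod_cast congrArg (Nat.cast : ℕ → ℚ) hmul
    rw [pow_add]
    calc (-1:ℚ)^l * (-1)^m * (n.choose (l+m)) * ((l+m).choose l)
        = (-1:ℚ)^l * (-1)^m * ((n.choose (l+m) : ℚ) * ((l+m).choose l)) := by ring
      _ = (-1:ℚ)^l * (-1)^m * ((n.choose l : ℚ) * ((n-l).choose m)) := by rw [this]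
      _ = (-1:ℚ)^l * (n.choose l) * ((-1:ℚ)^m * ((n-l).choose m)) := by ring
  rw [Finset.sum_congr rfl h2, ← Finset.mul_sum]
  have h3 : n + 1 - l = (n - l) + 1 := by omega
  rw [h3]
  have h4 : (∑ m ∈ Finset.range ((n-l) + 1), (-1:ℚ)^m * ((n-l).choose m)) = 0 := by
    have := @Int.alternating_sum_range_choose (n - l)
    rw [if_neg (by omega : ¬ n - l = 0)] at this
    exact_mod_cast congrArg (Int.cast : ℤ → ℚ) this
  rw [h4, mul_zero]

def Amat (n : ℕ) (l k : Fin (n+1)) : ℚ :=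
  if (l:ℕ) < n then (((k:ℕ).choose l : ℕ) : ℚ)
  else (-1:ℚ)^(n-(k:ℕ)) * ((k:ℕ).factorial) * ((n-(k:ℕ)).factorial)

/-- Given a basis `e_0, …, e_n` of `ℚ^{n+1}`, the vectors
`V = ∑ (-1)^{n-k} k!(n-k)! e_k` and `R(ℓ) = ∑_{k≥ℓ} C(k,ℓ) e_k` for `0 ≤ ℓ ≤ n-1`
form a basis of `ℚ^{n+1}`. -/
theorem stmt2 (n : ℕ) (e : Module.Basis (Fin (n+1)) ℚ (Fin (n+1) → ℚ)) :
    let Rvec : ℕ → (Fin (n+1) → ℚ) :=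
      fun ℓ => ∑ k : Fin (n+1), (Nat.choose (k : ℕ) ℓ : ℚ) • e k
    let V : Fin (n+1) → ℚ :=
      ∑ k : Fin (n+1),
        ((-1 : ℚ) ^ (n - (k : ℕ)) * (Nat.factorial (k : ℕ)) *
          (Nat.factorial (n - (k : ℕ)))) • e k
    let g : Fin (n+1) → (Fin (n+1) → ℚ) :=
      fun l => if (l : ℕ) < n then Rvec (l : ℕ) else V
    LinearIndependent ℚ g ∧ Submodule.span ℚ (Set.range g) = ⊤ := by
  intro Rvec V g
  have hg : ∀ l, g l = ∑ k, Amat n l k • e k := by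
    intro l
    by_cases hl : (l:ℕ) < n
    · simp only [g, Rvec, if_pos hl, Amat]
    · simp only [g, V, if_neg hl, Amat]
  have hli : LinearIndependent ℚ g := by
    rw [Fintype.linearIndependent_iff]
    intro c hc
    have hcomb : ∑ l, c l • g l = ∑ k, (∑ l, c l * Amat n l k) • e k := by
      simp_rw [hg, Finset.smul_sum, smul_smul]
      rw [Finset.sum_comm]
      simp_rw [Finset.sum_smul]
    have hrow : ∀ k : Fin (n+1), ∑ l, c l * Amat n l k = 0 := by
      have h0 := e.repr_sum_self (fun k => ∑ l, c l * Amat n l k)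
      rw [← hcomb, hc] at h0
      intro k
      have := congrFun h0 k
      simpa using this.symm
    have hC : ((n:ℚ)+1) * (-1:ℚ)^n * (n.factorial : ℚ) ≠ 0 := by
      have h1 : (0:ℚ) < (n:ℚ) + 1 := by positivity
      have h2 : (0:ℚ) < (n.factorial : ℚ) := by exact_mod_cast n.factorial_pos
      have h3 : (-1:ℚ)^n ≠ 0 := pow_ne_zero _ (by norm_num)
      positivity
    have hlast : c (Fin.last n) = 0 := by
      have hS : ∑ k : Fin (n+1),
          ((-1:ℚ)^(k:ℕ) * (n.choose (k:ℕ))) * (∑ l, c l * Amat n l k) = 0 := by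
        simp [hrow]
      have hswap : ∑ k : Fin (n+1),
          ((-1:ℚ)^(k:ℕ) * (n.choose (k:ℕ))) * (∑ l, c l * Amat n l k)
          = ∑ l, c l * (∑ k : Fin (n+1),
              ((-1:ℚ)^(k:ℕ) * (n.choose (k:ℕ))) * Amat n l k) := by
        simp_rw [Finset.mul_sum]
        rw [Finset.sum_comm]
        apply Finset.sum_congr rfl
        intro l _
        apply Finset.sum_congr rfl
        intro k _
        ring
      have hinner : ∀ l : Fin (n+1),
          ∑ k : Fin (n+1), ((-1:ℚ)^(k:ℕ) * (n.choose (k:ℕ))) * Amat n l k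
          = if (l:ℕ) < n then 0 else ((n:ℚ)+1) * (-1:ℚ)^n * (n.factorial : ℚ) := by
        intro l
        by_cases hl : (l:ℕ) < n
        · rw [if_pos hl]
          simp only [Amat, if_pos hl]
          have hk := key_alt n l hl
          rw [← hk, ← Fin.sum_univ_eq_sum_range
            (fun k => (-1:ℚ)^k * (n.choose k) * (k.choose l)) (n+1)]
        · rw [if_neg hl]
          simp only [Amat, if_neg hl]
          have hterm : ∀ k : Fin (n+1),
              ((-1:ℚ)^(k:ℕ) * (n.choose (k:ℕ))) *
                ((-1:ℚ)^(n-(k:ℕ)) * ((k:ℕ).factorial) * ((n-(k:ℕ)).factorial))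
              = (-1:ℚ)^n * (n.factorial : ℚ) := by
            intro k
            have hk : (k:ℕ) ≤ n := by omega
            have h1 : (n.choose (k:ℕ)) * (k:ℕ).factorial * (n-(k:ℕ)).factorial
                = n.factorial := Nat.choose_mul_factorial_mul_factorial hk
            have h2 : (-1:ℚ)^(k:ℕ) * (-1:ℚ)^(n-(k:ℕ)) = (-1:ℚ)^n := by
              rw [← pow_add]
              congr 1
              omega
            calc ((-1:ℚ)^(k:ℕ) * (n.choose (k:ℕ))) *
                ((-1:ℚ)^(n-(k:ℕ)) * ((k:ℕ).factorial) * ((n-(k:ℕ)).factorial))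
                = ((-1:ℚ)^(k:ℕ) * (-1:ℚ)^(n-(k:ℕ))) *
                  (((n.choose (k:ℕ)) : ℚ) * ((k:ℕ).factorial) * ((n-(k:ℕ)).factorial)) := by
                  ring
              _ = (-1:ℚ)^n * (n.factorial : ℚ) := by
                  rw [h2]
                  congr 1
                  exact_mod_cast congrArg (Nat.cast : ℕ → ℚ) h1
          rw [Finset.sum_congr rfl (fun k _ => hterm k), Finset.sum_const,
            Finset.card_univ, Fintype.card_fin, nsmul_eq_mul]
          push_cast
          ring
      rw [hswap, Finset.sum_congr rfl (fun l _ => by rw [hinner l])] at hS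
      rw [Finset.sum_eq_single (Fin.last n)] at hS
      · rw [if_neg (by simp)] at hS
        exact (mul_eq_zero.mp hS).resolve_right hC
      · intro l _ hne
        have hl : (l:ℕ) < n := by
          have := Fin.is_le l
          rcases lt_or_eq_of_le this with h | h
          · exact h
          · exact absurd (Fin.ext h) hne
        rw [if_pos hl, mul_zero]
      · intro habs
        exact absurd (Finset.mem_univ _) habs
    have hall : ∀ m : ℕ, ∀ hm : m < n + 1, c ⟨m, hm⟩ = 0 := by
      intro m
      induction m using Nat.strong_induction_on with
      | _ m ih =>
        intro hm
        by_cases hmn : m < n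
        · have h := hrow ⟨m, hm⟩
          rw [Finset.sum_eq_single (⟨m, hm⟩ : Fin (n+1))] at h
          · simpa [Amat, hmn] using h
          · intro l _ hne
            by_cases hl : (l:ℕ) < n
            · by_cases hlm : (l:ℕ) < m
              · have hc0 := ih (l:ℕ) hlm l.isLt
                rw [Fin.eta] at hc0
                rw [hc0, zero_mul]
              · have hml : m < (l:ℕ) := by
                  rcases Nat.lt_or_ge m (l:ℕ) with h' | h'
                  · exact h'
                  · exact absurd (Fin.ext (show (l:ℕ) = m by omega)) hne
                simp [Amat, hl, Nat.choose_eq_zero_of_lt hml]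
            · have hlv := l.isLt
              have : l = Fin.last n := by
                apply Fin.ext
                rw [Fin.val_last]
                omega
              rw [this, hlast, zero_mul]
          · intro habs
            exact absurd (Finset.mem_univ _) habs
        · have heq : (⟨m, hm⟩ : Fin (n+1)) = Fin.last n := Fin.ext (by simp; omega)
          rw [heq]
          exact hlast
    intro i
    have := hall i.1 i.2
    rwa [Fin.eta] at this
  refine ⟨hli, hli.span_eq_top_of_card_eq_finrank ?_⟩
  simp [Module.finrank_fin_fun]
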